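/- Let ρ ∈ [1,2). Then there exists a constant C_ρ > 0 such that for all t ∈ (0,∞): ( ∫_0^{e^t − 1} |K0(r,t)|^ρ dr )^{1/ρ} ≤ C_ρ (e^t − 1)^{1/ρ} (e^t + 1)^{−1}. -/

import Mathlib

open MeasureTheory Real intervalIntegral

/-- Rising factorial (Pochhammer symbol) `(q)_n = q (q+1) ⋯ (q+n−1)`. -/
noncomputable def risingFactorial (q : ℝ) : ℕ → ℝ
  | 0 => 1
  | n + 1 => risingFactorial q n * (q + (n : ℝ))

/-- The Gauss hypergeometric function `F(a,b;c;x)` defined by its power series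
`∑ ((a)_n (b)_n / ((c)_n n!)) x^n`. -/
noncomputable def hyperF (a b c x : ℝ) : ℝ :=
  ∑' n : ℕ, (risingFactorial a n * risingFactorial b n) /
    (risingFactorial c n * (Nat.factorial n : ℝ)) * x ^ n

/-- The kernel `K1(z,t) = ((1+e^t)²−z²)^{−1/2} F(1/2,1/2;1;((e^t−1)²−z²)/((e^t+1)²−z²))`. -/
noncomputable def K1 (z t : ℝ) : ℝ :=
  ((1 + Real.exp t) ^ 2 - z ^ 2) ^ (-(1 : ℝ) / 2) *
    hyperF (1 / 2) (1 / 2) 1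
      (((Real.exp t - 1) ^ 2 - z ^ 2) / ((Real.exp t + 1) ^ 2 - z ^ 2))

/-- The kernel `K0(z,t)`. -/
noncomputable def K0 (z t : ℝ) : ℝ :=
  -(1 / (2 * ((Real.exp t - 1) ^ 2 - z ^ 2) * Real.sqrt ((Real.exp t + 1) ^ 2 - z ^ 2))) *
    ((1 - Real.exp (2 * t) + z ^ 2) *
        hyperF (-(1 / 2)) (1 / 2) 1
          (((Real.exp t - 1) ^ 2 - z ^ 2) / ((Real.exp t + 1) ^ 2 - z ^ 2))
      + 2 * (Real.exp t - 1) *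
        hyperF (1 / 2) (1 / 2) 1
          (((Real.exp t - 1) ^ 2 - z ^ 2) / ((Real.exp t + 1) ^ 2 - z ^ 2)))

/-- `c n = (1/2)_n / n!` -/
noncomputable def ch (n : ℕ) : ℝ := risingFactorial (1/2) n / (Nat.factorial n : ℝ)

lemma rf_one (n : ℕ) : risingFactorial 1 n = (Nat.factorial n : ℝ) := by
  induction n with
  | zero => simp [risingFactorial]
  | succ n ih => simp [risingFactorial, ih, Nat.factorial_succ]; push_cast; ring

lemma rf_half_pos (n : ℕ) : 0 < risingFactorial (1/2) n := by
  induction n with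
  | zero => simp [risingFactorial]
  | succ n ih => exact mul_pos ih (by positivity)

lemma rf_neg_half_succ (n : ℕ) :
    risingFactorial (-(1/2)) (n+1) = -(1/2) * risingFactorial (1/2) n := by
  induction n with
  | zero => simp [risingFactorial]
  | succ n ih =>
      show risingFactorial (-(1/2)) (n+1) * _ = _
      rw [ih]; show _ = -(1/2) * (risingFactorial (1/2) n * _)
      push_cast; ring

lemma ch_pos (n : ℕ) : 0 < ch n := by
  have := rf_half_pos n
  have : (0:ℝ) < (Nat.factorial n : ℝ) := by positivity
  unfold ch; positivity

lemma ch_zero : ch 0 = 1 := by simp [ch, risingFactorial]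

lemma ch_succ (n : ℕ) : ch (n+1) = ch n * ((2*n+1) / (2*n+2)) := by
  unfold ch
  show risingFactorial (1/2) n * _ / _ = _
  rw [Nat.factorial_succ]
  push_cast
  field_simp
  ring

lemma ch_le_one (n : ℕ) : ch n ≤ 1 := by
  induction n with
  | zero => simp [ch_zero]
  | succ n ih =>
      rw [ch_succ]
      have h1 : ((2*(n:ℝ)+1)/(2*n+2)) ≤ 1 := by
        rw [div_le_one (by positivity)]; linarith
      calc ch n * ((2*(n:ℝ)+1)/(2*n+2)) ≤ 1 * 1 :=
        mul_le_mul ih h1 (by positivity) (by norm_num)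
      _ = 1 := by ring

lemma ch_sq_le (n : ℕ) : ch n ^ 2 ≤ 1 / (2*n+1) := by
  induction n with
  | zero => simp [ch_zero]
  | succ n ih =>
      rw [ch_succ, mul_pow]
      have h2 : (0:ℝ) < 2*(n:ℝ)+2 := by positivity
      have key : ((2*(n:ℝ)+1)/(2*n+2))^2 * (1/(2*n+1)) ≤ 1/(2*(n+1:ℕ)+1) := by
        push_cast
        rw [div_pow, div_mul_div_comm, div_le_div_iff₀ (by positivity) (by positivity)]
        ring_nf
        nlinarith [sq_nonneg ((n:ℝ))]
      calc ch n ^2 * ((2*(n:ℝ)+1)/(2*n+2))^2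
          ≤ (1/(2*n+1)) * ((2*(n:ℝ)+1)/(2*n+2))^2 := by
            apply mul_le_mul_of_nonneg_right ih (by positivity)
        _ = ((2*(n:ℝ)+1)/(2*n+2))^2 * (1/(2*n+1)) := by ring
        _ ≤ _ := key

/-- G series -/
noncomputable def Gs (x : ℝ) : ℝ := ∑' n : ℕ, ch n * ch (n+1) * x^n

lemma hyperF_plus (x : ℝ) : hyperF (1/2) (1/2) 1 x = ∑' n : ℕ, ch n ^2 * x^n := by
  unfold hyperF
  congr 1; funext n
  rw [rf_one]
  unfold ch
  have h : (0:ℝ) < (Nat.factorial n : ℝ) := by positivity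
  field_simp

lemma fm_coeff (n : ℕ) :
    (risingFactorial (-(1/2)) (n+1) * risingFactorial (1/2) (n+1)) /
      (risingFactorial 1 (n+1) * (Nat.factorial (n+1) : ℝ))
    = -(ch n * ch (n+1)) / (2*(n+1)) := by
  rw [rf_one, rf_neg_half_succ]
  unfold ch
  have h : (0:ℝ) < (Nat.factorial n : ℝ) := by positivity
  have hfs : ((Nat.factorial (n+1)) : ℝ) = ((n:ℝ)+1) * (Nat.factorial n : ℝ) := by
    rw [Nat.factorial_succ]; push_cast; ring
  rw [hfs]
  field_simp

lemma summable_sq (x : ℝ) (hx0 : 0 ≤ x) (hx1 : x < 1) :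
    Summable (fun n : ℕ => ch n ^2 * x^n) := by
  apply Summable.of_nonneg_of_le (fun n => by positivity)
    (fun n => ?_) (summable_geometric_of_lt_one hx0 hx1)
  have h1 : ch n ^2 ≤ 1 := by
    calc ch n^2 ≤ 1/(2*n+1) := ch_sq_le n
    _ ≤ 1 := by rw [div_le_one (by positivity)]; linarith [Nat.cast_nonneg (α := ℝ) n]
  calc ch n^2 * x^n ≤ 1 * x^n := mul_le_mul_of_nonneg_right h1 (by positivity)
  _ = x^n := one_mul _

lemma summable_G (x : ℝ) (hx0 : 0 ≤ x) (hx1 : x < 1) :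
    Summable (fun n : ℕ => ch n * ch (n+1) * x^n) := by
  apply Summable.of_nonneg_of_le
    (fun n => by have := ch_pos n; have := ch_pos (n+1); positivity)
    (fun n => ?_) (summable_geometric_of_lt_one hx0 hx1)
  have h1 : ch n * ch (n+1) ≤ 1 :=
    mul_le_one₀ (ch_le_one n) (ch_pos (n+1)).le (ch_le_one (n+1))
  calc ch n * ch (n+1) * x^n ≤ 1 * x^n :=
    mul_le_mul_of_nonneg_right h1 (by positivity)
  _ = x^n := one_mul _

/-- coefficients of F(-1/2,1/2;1;·) -/
noncomputable def emc : ℕ → ℝ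
  | 0 => 1
  | n + 1 => -(ch n * ch (n+1)) / (2*(n+1))

lemma hyperF_minus (x : ℝ) : hyperF (-(1/2)) (1/2) 1 x = ∑' n : ℕ, emc n * x^n := by
  unfold hyperF
  congr 1; funext n
  match n with
  | 0 => simp [risingFactorial, emc]
  | n + 1 => rw [fm_coeff]; rfl

lemma abs_emc_succ_le (n : ℕ) : |emc (n+1)| ≤ ch n * ch (n+1) / (2*(n+1)) := by
  show |(-(ch n * ch (n+1)) / (2*((n:ℝ)+1)))| ≤ _
  have h1 := (ch_pos n).le
  have h2 := (ch_pos (n+1)).le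
  rw [abs_div, abs_neg, abs_of_nonneg (by positivity : (0:ℝ) ≤ ch n * ch (n+1)),
    abs_of_nonneg (by positivity : (0:ℝ) ≤ 2*((n:ℝ)+1))]


lemma emc_succ_telescope (n : ℕ) :
    ch n * ch (n+1) / (2*(n+1)) ≤ ch n ^2 - ch (n+1) ^2 := by
  have h := ch_pos n
  have hq : ((2*(n:ℝ)+1)/(2*n+2)) / (2*((n:ℝ)+1)) ≤ 1 - ((2*(n:ℝ)+1)/(2*n+2))^2 := by
    have e1 : ((2*(n:ℝ)+1)/(2*n+2)) / (2*((n:ℝ)+1)) = (2*(n:ℝ)+1)/((2*n+2)^2) := by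
      rw [div_div]; ring_nf
    have e2 : 1 - ((2*(n:ℝ)+1)/(2*n+2))^2 = (4*(n:ℝ)+3)/((2*n+2)^2) := by
      field_simp; ring
    rw [e1, e2, div_le_div_iff_of_pos_right (by positivity)]
    linarith
  calc ch n * ch (n+1) / (2*(n+1))
      = ch n^2 * (((2*(n:ℝ)+1)/(2*n+2)) / (2*((n:ℝ)+1))) := by rw [ch_succ]; push_cast; ring
    _ ≤ ch n^2 * (1 - ((2*(n:ℝ)+1)/(2*n+2))^2) := by
        apply mul_le_mul_of_nonneg_left hq (by positivity)
    _ = ch n^2 - ch (n+1)^2 := by rw [ch_succ]; ring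

lemma abs_emc_le_one (n : ℕ) : |emc n| ≤ 1 := by
  match n with
  | 0 => simp [emc]
  | n + 1 =>
      refine (abs_emc_succ_le n).trans ?_
      have h1 := ch_le_one n
      have h2 := ch_le_one (n+1)
      have h3 := (ch_pos n).le
      have h4 := (ch_pos (n+1)).le
      have hd : (1:ℝ) ≤ 2*((n:ℝ)+1) := by
        have : (0:ℝ) ≤ (n:ℝ) := Nat.cast_nonneg n
        linarith
      calc ch n * ch (n+1) / (2*((n:ℝ)+1)) ≤ 1 / 1 := by
            apply div_le_div₀ (by norm_num) ?_ (by norm_num) hd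
            exact mul_le_one₀ h1 h4 h2
        _ = 1 := by norm_num

lemma summable_emc (x : ℝ) (hx0 : 0 ≤ x) (hx1 : x < 1) :
    Summable (fun n : ℕ => emc n * x^n) := by
  apply Summable.of_abs
  apply Summable.of_nonneg_of_le (fun n => abs_nonneg _)
    (fun n => ?_) (summable_geometric_of_lt_one hx0 hx1)
  rw [abs_mul, abs_pow, abs_of_nonneg hx0]
  calc |emc n| * x^n ≤ 1 * x^n :=
    mul_le_mul_of_nonneg_right (abs_emc_le_one n) (by positivity)
  _ = x^n := one_mul _

lemma summable_abs_emc (x : ℝ) (hx0 : 0 ≤ x) (hx1 : x < 1) :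
    Summable (fun n : ℕ => |emc n * x^n|) := by
  apply Summable.of_nonneg_of_le (fun n => abs_nonneg _)
    (fun n => ?_) (summable_geometric_of_lt_one hx0 hx1)
  rw [abs_mul, abs_pow, abs_of_nonneg hx0]
  calc |emc n| * x^n ≤ 1 * x^n :=
    mul_le_mul_of_nonneg_right (abs_emc_le_one n) (by positivity)
  _ = x^n := one_mul _

/-- the key series identity `F₊(x) − F₋(x) = x G(x)` -/
lemma diff_eq (x : ℝ) (hx0 : 0 ≤ x) (hx1 : x < 1) :
    hyperF (1/2) (1/2) 1 x - hyperF (-(1/2)) (1/2) 1 x = x * Gs x := by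
  rw [hyperF_plus, hyperF_minus,
    ← Summable.tsum_sub (summable_sq x hx0 hx1) (summable_emc x hx0 hx1)]
  have hs : Summable (fun n : ℕ => ch n^2 * x^n - emc n * x^n) :=
    (summable_sq x hx0 hx1).sub (summable_emc x hx0 hx1)
  rw [Summable.tsum_eq_zero_add hs]
  have h0 : ch 0 ^2 * x^0 - emc 0 * x^0 = 0 := by simp [ch_zero, emc]
  have hsucc : ∀ n : ℕ, ch (n+1)^2 * x^(n+1) - emc (n+1) * x^(n+1)
      = x * (ch n * ch (n+1) * x^n) := by
    intro n
    have hcoeff : ch (n+1)^2 - emc (n+1) = ch n * ch (n+1) := by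
      show ch (n+1)^2 - (-(ch n * ch (n+1)) / (2*((n:ℝ)+1))) = _
      rw [ch_succ]
      have hn : (0:ℝ) < 2*((n:ℝ)+1) := by positivity
      field_simp
      ring
    calc ch (n+1)^2 * x^(n+1) - emc (n+1) * x^(n+1)
        = (ch (n+1)^2 - emc (n+1)) * x^(n+1) := by ring
      _ = ch n * ch (n+1) * x^(n+1) := by rw [hcoeff]
      _ = x * (ch n * ch (n+1) * x^n) := by ring
  rw [h0, zero_add]
  calc ∑' n : ℕ, (ch (n+1)^2 * x^(n+1) - emc (n+1) * x^(n+1))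
      = ∑' n : ℕ, x * (ch n * ch (n+1) * x^n) := by
        congr 1; funext n; exact hsucc n
    _ = x * Gs x := tsum_mul_left

/-- bound `|F₋(x)| ≤ 2` -/
lemma Fm_abs_le (x : ℝ) (hx0 : 0 ≤ x) (hx1 : x < 1) :
    |hyperF (-(1/2)) (1/2) 1 x| ≤ 2 := by
  rw [hyperF_minus]
  have hsn : Summable (fun n : ℕ => ‖emc n * x^n‖) := by
    simpa only [Real.norm_eq_abs] using summable_abs_emc x hx0 hx1
  have h1 : ‖∑' n : ℕ, emc n * x^n‖ ≤ ∑' n : ℕ, ‖emc n * x^n‖ :=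
    norm_tsum_le_tsum_norm hsn
  simp only [Real.norm_eq_abs] at h1
  refine h1.trans ?_
  rw [Summable.tsum_eq_zero_add (summable_abs_emc x hx0 hx1)]
  have h0 : |emc 0 * x^0| = 1 := by simp [emc]
  rw [h0]
  have htail : (∑' n : ℕ, |emc (n+1) * x^(n+1)|) ≤ 1 := by
    apply Summable.tsum_le_of_sum_le
      ((summable_nat_add_iff (f := fun n : ℕ => |emc n * x^n|) 1).mpr
        (summable_abs_emc x hx0 hx1))
    intro s
    obtain ⟨N, hN⟩ := s.exists_nat_subset_range
    have hterm : ∀ n : ℕ, |emc (n+1) * x^(n+1)| ≤ ch n ^2 - ch (n+1)^2 := by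
      intro n
      rw [abs_mul, abs_pow, abs_of_nonneg hx0]
      have hx : x^(n+1) ≤ 1 := pow_le_one₀ hx0 hx1.le
      calc |emc (n+1)| * x^(n+1) ≤ |emc (n+1)| * 1 :=
            mul_le_mul_of_nonneg_left hx (abs_nonneg _)
        _ = |emc (n+1)| := mul_one _
        _ ≤ ch n * ch (n+1) / (2*(n+1)) := abs_emc_succ_le n
        _ ≤ ch n ^2 - ch (n+1)^2 := emc_succ_telescope n
    calc (∑ n ∈ s, |emc (n+1) * x^(n+1)|)
        ≤ ∑ n ∈ Finset.range N, |emc (n+1) * x^(n+1)| :=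
          Finset.sum_le_sum_of_subset_of_nonneg hN (fun i _ _ => abs_nonneg _)
      _ ≤ ∑ n ∈ Finset.range N, (ch n ^2 - ch (n+1)^2) :=
          Finset.sum_le_sum (fun i _ => hterm i)
      _ = ch 0 ^2 - ch N ^2 := Finset.sum_range_sub' (fun n => ch n ^2) N
      _ ≤ 1 := by rw [ch_zero]; nlinarith [sq_nonneg (ch N)]
  linarith

lemma sqrt_le_half_add (y : ℝ) (hy : 0 ≤ y) : Real.sqrt y ≤ (1+y)/2 := by
  nlinarith [Real.sq_sqrt hy, Real.sqrt_nonneg y, sq_nonneg (Real.sqrt y - 1)]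

lemma summable_succ_geo (x : ℝ) (hx0 : 0 ≤ x) (hx1 : x < 1) :
    Summable (fun n : ℕ => ((n:ℝ)+1) * x^n) := by
  have h1 : Summable (fun n : ℕ => (n:ℝ) * x^n) := by
    have := summable_pow_mul_geometric_of_norm_lt_one 1
      (r := x) (by rwa [Real.norm_eq_abs, abs_of_nonneg hx0])
    simpa using this
  have h2 := summable_geometric_of_lt_one hx0 hx1
  simpa [add_mul] using h1.add h2

lemma summable_sqrt_succ (x : ℝ) (hx0 : 0 ≤ x) (hx1 : x < 1) :
    Summable (fun n : ℕ => Real.sqrt (n+1) * x^n) := by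
  apply Summable.of_nonneg_of_le (fun n => by positivity) (fun n => ?_)
    (summable_succ_geo x hx0 hx1)
  apply mul_le_mul_of_nonneg_right ?_ (by positivity)
  have h := Real.sqrt_le_sqrt
    (show ((n:ℝ)+1) ≤ ((n:ℝ)+1)^2 by nlinarith [Nat.cast_nonneg (α := ℝ) n])
  rwa [Real.sqrt_sq (by positivity)] at h

lemma summable_sqrt' (x : ℝ) (hx0 : 0 ≤ x) (hx1 : x < 1) :
    Summable (fun n : ℕ => Real.sqrt n * x^n) := by
  apply Summable.of_nonneg_of_le (fun n => by positivity) (fun n => ?_)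
    (summable_succ_geo x hx0 hx1)
  apply mul_le_mul_of_nonneg_right ?_ (by positivity)
  have h := Real.sqrt_le_sqrt
    (show ((n:ℝ)) ≤ ((n:ℝ)+1)^2 by nlinarith [Nat.cast_nonneg (α := ℝ) n])
  rwa [Real.sqrt_sq (by positivity)] at h

lemma tsum_succ_geo (x : ℝ) (hx0 : 0 ≤ x) (hx1 : x < 1) :
    ∑' n : ℕ, ((n:ℝ)+1) * x^n = ((1-x)^2)⁻¹ := by
  have hx : ‖x‖ < 1 := by rwa [Real.norm_eq_abs, abs_of_nonneg hx0]
  have h1 : Summable (fun n : ℕ => (n:ℝ) * x^n) := by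
    have := summable_pow_mul_geometric_of_norm_lt_one 1 (r := x) hx
    simpa using this
  have h2 := summable_geometric_of_lt_one hx0 hx1
  have key : ∑' n : ℕ, ((n:ℝ)+1) * x^n
      = (∑' n : ℕ, (n:ℝ) * x^n) + ∑' n : ℕ, x^n := by
    rw [← Summable.tsum_add h1 h2]; congr 1; funext n; ring
  rw [key, tsum_coe_mul_geometric_of_norm_lt_one hx, tsum_geometric_of_lt_one hx0 hx1]
  have hne : (1:ℝ) - x ≠ 0 := by linarith
  field_simp
  ring

/-- `S(x) = ∑ √(n+1) xⁿ ≤ (1-x)^{-3/2}` -/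
lemma S_le (x : ℝ) (hx0 : 0 ≤ x) (hx1 : x < 1) :
    ∑' n : ℕ, Real.sqrt (n+1) * x^n ≤ ((1-x) * Real.sqrt (1-x))⁻¹ := by
  have hpos : (0:ℝ) < 1 - x := by linarith
  have hsq : (0:ℝ) < Real.sqrt (1-x) := Real.sqrt_pos.mpr hpos
  set a : ℝ := (Real.sqrt (1-x))⁻¹/2 with ha
  have hpoint : ∀ n : ℕ, Real.sqrt (n+1) * x^n
      ≤ a * ((1 + ((n:ℝ)+1)*(1-x)) * x^n) := by
    intro n
    have h1 : Real.sqrt ((n+1)*(1-x)) ≤ (1 + ((n:ℝ)+1)*(1-x))/2 :=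
      sqrt_le_half_add _ (by positivity)
    have h2 : Real.sqrt ((n+1)*(1-x)) = Real.sqrt (n+1) * Real.sqrt (1-x) :=
      Real.sqrt_mul (by positivity) _
    have h3 : Real.sqrt (n+1) ≤ a * (1 + ((n:ℝ)+1)*(1-x)) := by
      have e : Real.sqrt (n+1) = Real.sqrt ((n+1)*(1-x)) / Real.sqrt (1-x) := by
        rw [h2]; field_simp
      have e2 : a * (1 + ((n:ℝ)+1)*(1-x)) * Real.sqrt (1-x)
          = (1 + ((n:ℝ)+1)*(1-x))/2 := by
        rw [ha]; field_simp
      rw [e, div_le_iff₀ hsq, e2]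
      exact h1
    calc Real.sqrt (n+1) * x^n
        ≤ (a * (1 + ((n:ℝ)+1)*(1-x))) * x^n :=
          mul_le_mul_of_nonneg_right h3 (by positivity)
      _ = _ := by ring
  have hsum2 : Summable (fun n : ℕ => (1 + ((n:ℝ)+1)*(1-x)) * x^n) := by
    apply Summable.congr ((summable_geometric_of_lt_one hx0 hx1).add
      ((summable_succ_geo x hx0 hx1).mul_left (1-x)))
    intro n; ring
  calc ∑' n : ℕ, Real.sqrt (n+1) * x^n
      ≤ ∑' n : ℕ, a * ((1 + ((n:ℝ)+1)*(1-x)) * x^n) :=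
        Summable.tsum_le_tsum hpoint (summable_sqrt_succ x hx0 hx1) (hsum2.mul_left a)
    _ = a * ∑' n : ℕ, (1 + ((n:ℝ)+1)*(1-x)) * x^n := tsum_mul_left
    _ = a * ((∑' n : ℕ, x^n) + (1-x) * ∑' n : ℕ, ((n:ℝ)+1)*x^n) := by
        congr 1
        rw [← tsum_mul_left, ← Summable.tsum_add (summable_geometric_of_lt_one hx0 hx1)
          ((summable_succ_geo x hx0 hx1).mul_left (1-x))]
        congr 1; funext n; ring
    _ = ((1-x) * Real.sqrt (1-x))⁻¹ := by
        rw [tsum_geometric_of_lt_one hx0 hx1, tsum_succ_geo x hx0 hx1, ha]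
        have hs2 : Real.sqrt (1-x) * Real.sqrt (1-x) = 1-x :=
          Real.mul_self_sqrt hpos.le
        field_simp
        nlinarith [hs2, hsq]

/-- the bound `G(x) ≤ 2/√(1-x)` -/
lemma G_le (x : ℝ) (hx0 : 0 ≤ x) (hx1 : x < 1) :
    Gs x ≤ 2 / Real.sqrt (1-x) := by
  have hpos : (0:ℝ) < 1 - x := by linarith
  have hsq : (0:ℝ) < Real.sqrt (1-x) := Real.sqrt_pos.mpr hpos
  have hcc : ∀ n : ℕ, ch n * ch (n+1) ≤ 2*(Real.sqrt (n+1) - Real.sqrt n) := by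
    intro n
    have b2 : Real.sqrt n ^ 2 = (n:ℝ) := Real.sq_sqrt (Nat.cast_nonneg n)
    have b3 : Real.sqrt ((n:ℝ)+1) ^ 2 = ((n:ℝ)+1) := Real.sq_sqrt (by positivity)
    have hb := Real.sqrt_nonneg (n:ℝ)
    have hb1 : (0:ℝ) < Real.sqrt ((n:ℝ)+1) := Real.sqrt_pos.mpr (by positivity)
    have c1 : ch n * ch (n+1) ≤ 1/((n:ℝ)+1) := by
      have d1 : ch (n+1) ≤ ch n := by
        rw [ch_succ]
        calc ch n * ((2*(n:ℝ)+1)/(2*n+2)) ≤ ch n * 1 := by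
              apply mul_le_mul_of_nonneg_left ?_ (ch_pos n).le
              rw [div_le_one (by positivity)]; linarith
          _ = ch n := mul_one _
      calc ch n * ch (n+1) ≤ ch n * ch n :=
            mul_le_mul_of_nonneg_left d1 (ch_pos n).le
        _ = ch n ^2 := by ring
        _ ≤ 1/(2*(n:ℝ)+1) := ch_sq_le n
        _ ≤ 1/((n:ℝ)+1) := by
            apply div_le_div_of_nonneg_left (by norm_num) (by positivity)
            linarith [Nat.cast_nonneg (α := ℝ) n]
    have c2 : 1/((n:ℝ)+1) ≤ 2*(Real.sqrt ((n:ℝ)+1) - Real.sqrt n) := by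
      have hs2 : (Real.sqrt n * Real.sqrt ((n:ℝ)+1))^2 = (n:ℝ)*((n:ℝ)+1) := by
        rw [mul_pow, b2, b3]
      have hab : 2 * (Real.sqrt n * Real.sqrt ((n:ℝ)+1)) ≤ 2*(n:ℝ)+1 := by
        nlinarith [hs2, mul_nonneg hb hb1.le]
      have hbn : Real.sqrt ((n:ℝ)+1) ≤ (n:ℝ)+1 := by
        have h := Real.sqrt_le_sqrt
          (show ((n:ℝ)+1) ≤ ((n:ℝ)+1)^2 by nlinarith [Nat.cast_nonneg (α := ℝ) n])
        rwa [Real.sqrt_sq (by positivity)] at h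
      have step1 : 1/((n:ℝ)+1) ≤ 1/Real.sqrt ((n:ℝ)+1) :=
        one_div_le_one_div_of_le hb1 hbn
      have expand : 2*(Real.sqrt ((n:ℝ)+1) - Real.sqrt n) * Real.sqrt ((n:ℝ)+1)
          = 2*((n:ℝ)+1) - 2*(Real.sqrt n * Real.sqrt ((n:ℝ)+1)) := by
        linear_combination 2*b3
      have step2 : 1/Real.sqrt ((n:ℝ)+1) ≤ 2*(Real.sqrt ((n:ℝ)+1) - Real.sqrt n) := by
        rw [div_le_iff₀ hb1, expand]
        linarith
      linarith
    calc ch n * ch (n+1) ≤ 1/((n:ℝ)+1) := c1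
      _ ≤ 2*(Real.sqrt ((n:ℝ)+1) - Real.sqrt n) := c2
  have hpoint : ∀ n : ℕ, ch n * ch (n+1) * x^n
      ≤ 2*((Real.sqrt ((n:ℝ)+1) - Real.sqrt n) * x^n) := by
    intro n
    calc ch n * ch (n+1) * x^n ≤ (2*(Real.sqrt ((n:ℝ)+1) - Real.sqrt n)) * x^n :=
          mul_le_mul_of_nonneg_right (hcc n) (by positivity)
      _ = _ := by ring
  have hTsummable : Summable (fun n : ℕ => (Real.sqrt ((n:ℝ)+1) - Real.sqrt n) * x^n) := by
    apply Summable.congr ((summable_sqrt_succ x hx0 hx1).sub (summable_sqrt' x hx0 hx1))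
    intro n; ring
  have hshift : ∑' n : ℕ, Real.sqrt n * x^n
      = x * ∑' n : ℕ, Real.sqrt ((n:ℝ)+1) * x^n := by
    rw [Summable.tsum_eq_zero_add (summable_sqrt' x hx0 hx1)]
    simp only [Nat.cast_zero, Real.sqrt_zero, zero_mul, pow_zero, mul_one, zero_add]
    rw [← tsum_mul_left]
    congr 1; funext n; push_cast; ring
  have hT : ∑' n : ℕ, (Real.sqrt ((n:ℝ)+1) - Real.sqrt n) * x^n
      = (1-x) * ∑' n : ℕ, Real.sqrt ((n:ℝ)+1) * x^n := by
    have e : ∀ n : ℕ, (Real.sqrt ((n:ℝ)+1) - Real.sqrt n) * x^n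
        = Real.sqrt ((n:ℝ)+1) * x^n - Real.sqrt n * x^n := fun n => by ring
    rw [tsum_congr e, Summable.tsum_sub (summable_sqrt_succ x hx0 hx1) (summable_sqrt' x hx0 hx1),
      hshift]
    ring
  have hS := S_le x hx0 hx1
  calc Gs x ≤ ∑' n : ℕ, 2*((Real.sqrt ((n:ℝ)+1) - Real.sqrt n) * x^n) :=
        Summable.tsum_le_tsum hpoint (summable_G x hx0 hx1) (hTsummable.mul_left 2)
    _ = 2 * ∑' n : ℕ, (Real.sqrt ((n:ℝ)+1) - Real.sqrt n) * x^n := tsum_mul_left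
    _ = 2 * ((1-x) * ∑' n : ℕ, Real.sqrt ((n:ℝ)+1) * x^n) := by rw [hT]
    _ ≤ 2 * ((1-x) * ((1-x) * Real.sqrt (1-x))⁻¹) := by
        apply mul_le_mul_of_nonneg_left ?_ (by norm_num)
        apply mul_le_mul_of_nonneg_left hS hpos.le
    _ = 2 / Real.sqrt (1-x) := by
        field_simp

lemma one_lt_exp' (t : ℝ) (ht : 0 < t) : 1 < Real.exp t := by
  calc (1:ℝ) = Real.exp 0 := Real.exp_zero.symm
  _ < Real.exp t := Real.exp_lt_exp.mpr ht

lemma zeta_mem (z t : ℝ) (ht : 0 < t) (hz0 : 0 ≤ z) (hz : z < Real.exp t - 1) :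
    0 ≤ ((Real.exp t - 1)^2 - z^2) / ((Real.exp t + 1)^2 - z^2) ∧
    ((Real.exp t - 1)^2 - z^2) / ((Real.exp t + 1)^2 - z^2) < 1 := by
  have hE := one_lt_exp' t ht
  have hDm : 0 < (Real.exp t - 1)^2 - z^2 := by nlinarith
  have hDp : 0 < (Real.exp t + 1)^2 - z^2 := by nlinarith
  constructor
  · positivity
  · rw [div_lt_one hDp]
    nlinarith [Real.exp_pos t]

lemma K0_eq (z t : ℝ) (ht : 0 < t) (hz0 : 0 ≤ z) (hz : z < Real.exp t - 1) :
    K0 z t = hyperF (-(1/2)) (1/2) 1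
        (((Real.exp t - 1)^2 - z^2) / ((Real.exp t + 1)^2 - z^2))
        / (2 * Real.sqrt ((Real.exp t + 1)^2 - z^2))
      - (Real.exp t - 1) *
          Gs (((Real.exp t - 1)^2 - z^2) / ((Real.exp t + 1)^2 - z^2))
        / (((Real.exp t + 1)^2 - z^2) * Real.sqrt ((Real.exp t + 1)^2 - z^2)) := by
  have hE := one_lt_exp' t ht
  have hDm : 0 < (Real.exp t - 1)^2 - z^2 := by nlinarith
  have hDp : 0 < (Real.exp t + 1)^2 - z^2 := by nlinarith
  have hsq : 0 < Real.sqrt ((Real.exp t + 1)^2 - z^2) := Real.sqrt_pos.mpr hDp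
  obtain ⟨hζ0, hζ1⟩ := zeta_mem z t ht hz0 hz
  have hFp : hyperF (1/2) (1/2) 1
      (((Real.exp t - 1)^2 - z^2) / ((Real.exp t + 1)^2 - z^2))
      = hyperF (-(1/2)) (1/2) 1
          (((Real.exp t - 1)^2 - z^2) / ((Real.exp t + 1)^2 - z^2))
        + (((Real.exp t - 1)^2 - z^2) / ((Real.exp t + 1)^2 - z^2)) *
          Gs (((Real.exp t - 1)^2 - z^2) / ((Real.exp t + 1)^2 - z^2)) := by
    linarith [diff_eq _ hζ0 hζ1]
  have hexp2 : Real.exp (2*t) = Real.exp t ^ 2 := by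
    rw [two_mul, Real.exp_add]; ring
  unfold K0
  rw [hFp, hexp2]
  field_simp
  ring

lemma Gs_nonneg (x : ℝ) (hx0 : 0 ≤ x) : 0 ≤ Gs x := by
  apply tsum_nonneg
  intro n
  have := (ch_pos n).le
  have := (ch_pos (n+1)).le
  positivity

lemma sqrt_exp_half (t : ℝ) : Real.sqrt (Real.exp t) = Real.exp (t/2) := by
  rw [show Real.exp t = Real.exp (t/2) * Real.exp (t/2) by
    rw [← Real.exp_add]; congr 1; ring]
  exact Real.sqrt_mul_self (Real.exp_pos _).le

lemma K0_bound (z t : ℝ) (ht : 0 < t) (hz0 : 0 ≤ z) (hz : z < Real.exp t - 1) :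
    |K0 z t| ≤ (Real.sqrt ((Real.exp t + 1) * (Real.exp t + 1 - z)))⁻¹
      + Real.exp (t/2) * ((Real.exp t + 1) * (Real.exp t + 1 - z))⁻¹ := by
  have hE := one_lt_exp' t ht
  have hDm : 0 < (Real.exp t - 1)^2 - z^2 := by nlinarith
  have hDp0 : 0 < (Real.exp t + 1)^2 - z^2 := by nlinarith
  obtain ⟨hζ0, hζ1⟩ := zeta_mem z t ht hz0 hz
  set ζ := ((Real.exp t - 1)^2 - z^2) / ((Real.exp t + 1)^2 - z^2) with hζ
  set Dp := (Real.exp t + 1)^2 - z^2 with hDpdef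
  have hDp : 0 < Dp := hDp0
  have hsq : 0 < Real.sqrt Dp := Real.sqrt_pos.mpr hDp
  rw [K0_eq z t ht hz0 hz]
  have hG0 := Gs_nonneg ζ hζ0
  have hB0 : (0:ℝ) < Real.exp t - 1 := by linarith
  have hAz : 0 < (Real.exp t + 1) * (Real.exp t + 1 - z) := by nlinarith
  have hsqA : 0 < Real.sqrt ((Real.exp t + 1) * (Real.exp t + 1 - z)) :=
    Real.sqrt_pos.mpr hAz
  have hfact : (Real.exp t + 1) * (Real.exp t + 1 - z) ≤ Dp := by
    rw [hDpdef]; nlinarith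
  -- triangle inequality
  have tri : |hyperF (-(1/2)) (1/2) 1 ζ / (2 * Real.sqrt Dp)
      - (Real.exp t - 1) * Gs ζ / (Dp * Real.sqrt Dp)|
      ≤ |hyperF (-(1/2)) (1/2) 1 ζ| / (2 * Real.sqrt Dp)
        + (Real.exp t - 1) * Gs ζ / (Dp * Real.sqrt Dp) := by
    refine (abs_sub _ _).trans ?_
    rw [abs_div, abs_of_nonneg (by positivity : (0:ℝ) ≤ 2 * Real.sqrt Dp),
      abs_div, abs_of_nonneg (by positivity : (0:ℝ) ≤ Dp * Real.sqrt Dp),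
      abs_of_nonneg (by positivity : (0:ℝ) ≤ (Real.exp t - 1) * Gs ζ)]
  refine tri.trans ?_
  -- first term
  have h1 : |hyperF (-(1/2)) (1/2) 1 ζ| / (2 * Real.sqrt Dp) ≤ (Real.sqrt Dp)⁻¹ := by
    have hFm := Fm_abs_le ζ hζ0 hζ1
    calc |hyperF (-(1/2)) (1/2) 1 ζ| / (2 * Real.sqrt Dp)
        ≤ 2 / (2 * Real.sqrt Dp) := by gcongr
      _ = (Real.sqrt Dp)⁻¹ := by field_simp
  -- second term
  have hone : (1:ℝ) - ζ = 4 * Real.exp t / Dp := by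
    rw [hζ, eq_div_iff hDp.ne', sub_mul, div_mul_cancel₀ _ hDp.ne', one_mul, hDpdef]
    ring
  have h4 : Real.sqrt (4 * Real.exp t) = 2 * Real.exp (t/2) := by
    rw [Real.sqrt_mul (by norm_num : (0:ℝ) ≤ 4), sqrt_exp_half,
      show (4:ℝ) = 2^2 by norm_num, Real.sqrt_sq (by norm_num : (0:ℝ) ≤ 2)]
  have hsqne : Real.sqrt (1-ζ) = 2 * Real.exp (t/2) / Real.sqrt Dp := by
    rw [hone, Real.sqrt_div (by positivity) Dp, h4]
  have hexphalf : (0:ℝ) < Real.exp (t/2) := Real.exp_pos _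
  have hGb : Gs ζ ≤ Real.sqrt Dp / Real.exp (t/2) := by
    have hG2 := G_le ζ hζ0 hζ1
    rw [hsqne] at hG2
    calc Gs ζ ≤ 2 / (2 * Real.exp (t/2) / Real.sqrt Dp) := hG2
      _ = Real.sqrt Dp / Real.exp (t/2) := by
          field_simp
  have h2 : (Real.exp t - 1) * Gs ζ / (Dp * Real.sqrt Dp) ≤ Real.exp (t/2) / Dp := by
    have hEsplit : Real.exp t = Real.exp (t/2) * Real.exp (t/2) := by
      rw [← Real.exp_add]; congr 1; ring
    have hstep : (Real.exp t - 1) * Gs ζ ≤ Real.exp (t/2) * Real.sqrt Dp := by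
      calc (Real.exp t - 1) * Gs ζ
          ≤ Real.exp t * (Real.sqrt Dp / Real.exp (t/2)) :=
            mul_le_mul (by linarith) hGb hG0 (Real.exp_pos t).le
        _ = Real.exp (t/2) * Real.sqrt Dp := by
            rw [hEsplit]; field_simp
    rw [div_le_div_iff₀ (by positivity) hDp]
    calc (Real.exp t - 1) * Gs ζ * Dp ≤ (Real.exp (t/2) * Real.sqrt Dp) * Dp :=
          mul_le_mul_of_nonneg_right hstep hDp.le
      _ = Real.exp (t/2) * (Dp * Real.sqrt Dp) := by ring
  have m1 : (Real.sqrt Dp)⁻¹ ≤ (Real.sqrt ((Real.exp t + 1) * (Real.exp t + 1 - z)))⁻¹ :=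
    inv_anti₀ hsqA (Real.sqrt_le_sqrt hfact)
  have m2 : Real.exp (t/2) / Dp ≤ Real.exp (t/2) * ((Real.exp t + 1) * (Real.exp t + 1 - z))⁻¹ := by
    rw [div_eq_mul_inv]
    exact mul_le_mul_of_nonneg_left (inv_anti₀ hAz hfact) hexphalf.le
  linarith [h1, h2, m1, m2]

lemma rpow_add_le' (a b p : ℝ) (ha : 0 ≤ a) (hb : 0 ≤ b) (hp : 0 ≤ p) :
    (a+b)^p ≤ 2^p * (a^p + b^p) := by
  have hap : (0:ℝ) ≤ a^p := Real.rpow_nonneg ha p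
  have hbp : (0:ℝ) ≤ b^p := Real.rpow_nonneg hb p
  have h2 : (0:ℝ) ≤ 2^p := Real.rpow_nonneg (by norm_num) p
  rcases le_total a b with h | h
  · calc (a+b)^p ≤ (2*b)^p := Real.rpow_le_rpow (by linarith) (by linarith) hp
      _ = 2^p * b^p := Real.mul_rpow (by norm_num) hb
      _ ≤ 2^p * (a^p + b^p) := by nlinarith
  · calc (a+b)^p ≤ (2*a)^p := Real.rpow_le_rpow (by linarith) (by linarith) hp
      _ = 2^p * a^p := Real.mul_rpow (by norm_num) ha
      _ ≤ 2^p * (a^p + b^p) := by nlinarith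

lemma K0_endpoint (t : ℝ) : K0 (Real.exp t - 1) t = 0 := by
  unfold K0
  rw [sub_self, mul_zero, zero_mul, div_zero, neg_zero, zero_mul]

set_option maxHeartbeats 2000000 in
theorem statement16 (ρ : ℝ) (hρ1 : 1 ≤ ρ) (hρ2 : ρ < 2) :
    ∃ Cρ > 0, ∀ t : ℝ, 0 < t →
      (∫ r in (0 : ℝ)..(Real.exp t - 1), |K0 r t| ^ ρ) ^ (1 / ρ)
        ≤ Cρ * (Real.exp t - 1) ^ (1 / ρ) * (Real.exp t + 1)⁻¹ := by
  have hρ0 : (0:ℝ) < ρ := by linarith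
  set s : ℝ := 1 - ρ/2 with hs
  have hs0 : 0 < s := by rw [hs]; linarith
  have hs1 : s ≤ 1 := by rw [hs]; linarith
  set M : ℝ := 2^ρ * (2/s) with hM
  have h2ρ : (0:ℝ) < 2^ρ := Real.rpow_pos_of_pos (by norm_num) ρ
  have hM0 : 0 < M := by rw [hM]; positivity
  refine ⟨M^(1/ρ), Real.rpow_pos_of_pos hM0 _, ?_⟩
  intro t ht
  have hE := one_lt_exp' t ht
  set A : ℝ := Real.exp t + 1 with hA
  set B : ℝ := Real.exp t - 1 with hB
  have hB0 : 0 < B := by rw [hB]; linarith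
  have hA0 : (0:ℝ) < A := by rw [hA]; positivity
  have hA2 : (2:ℝ) ≤ A := by rw [hA]; linarith
  have hAB : A - B = 2 := by rw [hA, hB]; ring
  have hAr : ∀ r ∈ Set.Icc (0:ℝ) B, (2:ℝ) ≤ A - r := by
    intro r hr
    have := hr.2
    rw [hA]; rw [hB] at this; linarith
  -- the dominating function
  set g : ℝ → ℝ := fun r => 2^ρ * (A^(-(ρ/2)) * (A-r)^(-(ρ/2))
    + (Real.exp (ρ*t/2) * A^(-ρ)) * (A-r)^(-ρ)) with hg
  have hgnn : ∀ r ∈ Set.Icc (0:ℝ) B, 0 ≤ g r := by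
    intro r hr
    have h2r := hAr r hr
    have hArn : (0:ℝ) ≤ A - r := by linarith
    rw [hg]
    have := Real.rpow_nonneg hA0.le (-(ρ/2))
    have := Real.rpow_nonneg hArn (-(ρ/2))
    have := Real.rpow_nonneg hA0.le (-ρ)
    have := Real.rpow_nonneg hArn (-ρ)
    have := (Real.exp_pos (ρ*t/2)).le
    positivity
  -- continuity and integrability of pieces
  have hcontAr : ∀ q : ℝ, ContinuousOn (fun r : ℝ => (A-r)^q) (Set.Icc (0:ℝ) B) := by
    intro q
    apply ContinuousOn.rpow_const (by fun_prop)
    intro r hr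
    exact Or.inl (by have := hAr r hr; intro h; rw [h] at this; linarith)
  have hint1 : IntervalIntegrable (fun r : ℝ => (A-r)^(-(ρ/2))) MeasureTheory.volume 0 B := by
    apply ContinuousOn.intervalIntegrable
    rw [Set.uIcc_of_le hB0.le]
    exact hcontAr _
  have hint2 : IntervalIntegrable (fun r : ℝ => (A-r)^(-ρ)) MeasureTheory.volume 0 B := by
    apply ContinuousOn.intervalIntegrable
    rw [Set.uIcc_of_le hB0.le]
    exact hcontAr _
  have hintInv : IntervalIntegrable (fun r : ℝ => (A-r)⁻¹) MeasureTheory.volume 0 B := by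
    apply ContinuousOn.intervalIntegrable
    rw [Set.uIcc_of_le hB0.le]
    apply ContinuousOn.inv₀ (by fun_prop)
    intro r hr
    have := hAr r hr; intro h; rw [h] at this; linarith
  have hgint : IntervalIntegrable g MeasureTheory.volume 0 B := by
    apply ContinuousOn.intervalIntegrable
    rw [Set.uIcc_of_le hB0.le, hg]
    apply ContinuousOn.mul continuousOn_const
    exact (continuousOn_const.mul (hcontAr _)).add (continuousOn_const.mul (hcontAr _))
  -- pointwise bound
  have hpt : ∀ r ∈ Set.Icc (0:ℝ) B, |K0 r t|^ρ ≤ g r := by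
    intro r hr
    rcases eq_or_lt_of_le hr.2 with hrB | hrB
    · rw [hrB, hB, K0_endpoint, abs_zero, Real.zero_rpow hρ0.ne']
      exact hgnn B (by constructor <;> [exact hB0.le; exact le_rfl])
    · have hbnd := K0_bound r t ht hr.1 (by rw [← hB]; exact hrB)
      have h2r := hAr r hr
      have hArpos : (0:ℝ) < A - r := by linarith
      have hAAr : (0:ℝ) < A * (A - r) := by positivity
      have step1 : |K0 r t|^ρ ≤ ((Real.sqrt (A*(A-r)))⁻¹
          + Real.exp (t/2) * (A*(A-r))⁻¹)^ρ :=
        Real.rpow_le_rpow (abs_nonneg _) hbnd hρ0.le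
      have step2 : ((Real.sqrt (A*(A-r)))⁻¹ + Real.exp (t/2) * (A*(A-r))⁻¹)^ρ
          ≤ 2^ρ * (((Real.sqrt (A*(A-r)))⁻¹)^ρ + (Real.exp (t/2) * (A*(A-r))⁻¹)^ρ) :=
        rpow_add_le' _ _ ρ (by positivity) (by positivity) hρ0.le
      have e1 : ((Real.sqrt (A*(A-r)))⁻¹)^ρ = A^(-(ρ/2)) * (A-r)^(-(ρ/2)) := by
        rw [Real.sqrt_eq_rpow, ← Real.rpow_neg hAAr.le, ← Real.rpow_mul hAAr.le,
          show -(1/2) * ρ = -(ρ/2) by ring,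
          Real.mul_rpow hA0.le hArpos.le]
      have e2 : (Real.exp (t/2) * (A*(A-r))⁻¹)^ρ
          = Real.exp (ρ*t/2) * (A^(-ρ) * (A-r)^(-ρ)) := by
        rw [Real.mul_rpow (Real.exp_pos _).le (by positivity),
          ← Real.exp_mul, show t/2*ρ = ρ*t/2 by ring,
          ← Real.rpow_neg_one (A*(A-r)), ← Real.rpow_mul hAAr.le,
          show (-1:ℝ) * ρ = -ρ by ring,
          Real.mul_rpow hA0.le hArpos.le]
      calc |K0 r t|^ρ ≤ ((Real.sqrt (A*(A-r)))⁻¹ + Real.exp (t/2) * (A*(A-r))⁻¹)^ρ := step1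
        _ ≤ 2^ρ * (((Real.sqrt (A*(A-r)))⁻¹)^ρ + (Real.exp (t/2) * (A*(A-r))⁻¹)^ρ) := step2
        _ = g r := by rw [e1, e2, hg]; ring
  -- comparison of integrals
  have hIK : (∫ r in (0:ℝ)..B, |K0 r t|^ρ) ≤ ∫ r in (0:ℝ)..B, g r := by
    by_cases hi : IntervalIntegrable (fun r => |K0 r t|^ρ) MeasureTheory.volume 0 B
    · exact intervalIntegral.integral_mono_on hB0.le hi hgint hpt
    · rw [intervalIntegral.integral_undef hi]
      exact intervalIntegral.integral_nonneg hB0.le hgnn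
  -- first explicit integral
  have hFTC1 : (∫ r in (0:ℝ)..B, (A-r)^(-(ρ/2))) = (A^s - 2^s)/s := by
    have hs1' : s - 1 = -(ρ/2) := by rw [hs]; ring
    have hderiv : ∀ x ∈ Set.uIcc (0:ℝ) B,
        HasDerivAt (fun u => -((A-u)^s/s)) ((A-x)^(-(ρ/2))) x := by
      intro x hx
      rw [Set.uIcc_of_le hB0.le] at hx
      have hArx : (0:ℝ) < A - x := by have := hAr x hx; linarith
      have h0 : HasDerivAt (fun u : ℝ => A - u) (-1) x := by
        simpa using (hasDerivAt_id x).const_sub A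
      have h1 := h0.rpow_const (p := s) (Or.inl hArx.ne')
      have h2 := (h1.div_const s).neg
      refine h2.congr_deriv ?_
      rw [← hs1']
      field_simp
    rw [intervalIntegral.integral_eq_sub_of_hasDerivAt hderiv hint1]
    rw [sub_zero, hAB]
    field_simp
    ring
  have hkey1 : A^s - 2^s ≤ B * A^(s-1) := by
    set y : ℝ := 2/A with hy
    have hy0 : 0 < y := by rw [hy]; positivity
    have hy1 : y ≤ 1 := by rw [hy, div_le_one hA0]; linarith
    have hys : y ≤ y^s := by
      have := Real.rpow_le_rpow_of_exponent_ge hy0 hy1 hs1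
      rwa [Real.rpow_one] at this
    have h2s : (2:ℝ)^s = A^s * y^s := by
      rw [← Real.mul_rpow hA0.le hy0.le, hy, mul_div_cancel₀ _ hA0.ne']
    have hAs : (0:ℝ) ≤ A^s := Real.rpow_nonneg hA0.le s
    have hstep : A^s - 2^s ≤ A^s * (1 - y) := by
      rw [h2s]
      nlinarith
    refine hstep.trans ?_
    have hAs1 : A^(s-1) = A^s / A := by
      rw [Real.rpow_sub hA0, Real.rpow_one]
    have hBA : B = A - 2 := by rw [hB, hA]; ring
    have heq : A^s * (1 - y) = B * A^(s-1) := by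
      rw [hAs1, hBA, hy]
      field_simp
      try ring
    linarith [heq]
  have hI1 : (∫ r in (0:ℝ)..B, (A-r)^(-(ρ/2))) ≤ (1/s) * B * A^(-(ρ/2)) := by
    rw [hFTC1]
    have hs1' : s - 1 = -(ρ/2) := by rw [hs]; ring
    calc (A^s - 2^s)/s ≤ (B * A^(s-1))/s := by
          apply div_le_div_of_nonneg_right hkey1 hs0.le
      _ = (1/s) * B * A^(-(ρ/2)) := by rw [hs1']; ring
  -- second integral
  have hFTC2 : (∫ r in (0:ℝ)..B, (A-r)⁻¹) = Real.log A - Real.log 2 := by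
    have hderiv : ∀ x ∈ Set.uIcc (0:ℝ) B,
        HasDerivAt (fun u => -Real.log (A-u)) ((A-x)⁻¹) x := by
      intro x hx
      rw [Set.uIcc_of_le hB0.le] at hx
      have hArx : (0:ℝ) < A - x := by have := hAr x hx; linarith
      have h0 : HasDerivAt (fun u : ℝ => A - u) (-1) x := by
        simpa using (hasDerivAt_id x).const_sub A
      have h1 := (h0.log hArx.ne').neg
      refine h1.congr_deriv ?_
      field_simp
    rw [intervalIntegral.integral_eq_sub_of_hasDerivAt hderiv hintInv]
    rw [sub_zero, hAB]
    ring
  have hI2 : (∫ r in (0:ℝ)..B, (A-r)^(-ρ)) ≤ t := by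
    have hptw : ∀ r ∈ Set.Icc (0:ℝ) B, (A-r)^(-ρ) ≤ (A-r)⁻¹ := by
      intro r hr
      have h2r := hAr r hr
      calc (A-r)^(-ρ) ≤ (A-r)^(-1:ℝ) :=
            Real.rpow_le_rpow_of_exponent_le (by linarith) (by linarith)
        _ = (A-r)⁻¹ := Real.rpow_neg_one _
    have hcmp := intervalIntegral.integral_mono_on hB0.le hint2 hintInv hptw
    have hlog : Real.log A - Real.log 2 ≤ t := by
      have hA2e : A ≤ 2 * Real.exp t := by rw [hA]; linarith
      have : Real.log A ≤ Real.log (2 * Real.exp t) :=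
        Real.log_le_log hA0 hA2e
      rw [Real.log_mul (by norm_num) (Real.exp_pos t).ne', Real.log_exp] at this
      linarith
    calc (∫ r in (0:ℝ)..B, (A-r)^(-ρ)) ≤ ∫ r in (0:ℝ)..B, (A-r)⁻¹ := hcmp
      _ = Real.log A - Real.log 2 := hFTC2
      _ ≤ t := hlog
  -- the exponential-time bound
  have hexpt : Real.exp (ρ*t/2) * t ≤ (1/s) * B := by
    have h1 : s*t + 1 ≤ Real.exp (s*t) := Real.add_one_le_exp _
    have h3 : Real.exp (ρ*t/2) * (Real.exp (s*t) - 1) = Real.exp t - Real.exp (ρ*t/2) := by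
      rw [mul_sub, ← Real.exp_add, mul_one]
      congr 2
      rw [hs]; ring
    have h4 : (1:ℝ) ≤ Real.exp (ρ*t/2) :=
      Real.one_le_exp (by positivity)
    have h5 : Real.exp (ρ*t/2) * (s*t) ≤ Real.exp t - Real.exp (ρ*t/2) := by
      rw [← h3]
      apply mul_le_mul_of_nonneg_left (by linarith) (Real.exp_pos _).le
    have h6 : s * (Real.exp (ρ*t/2) * t) ≤ B := by
      rw [hB]; nlinarith
    have h7 : Real.exp (ρ*t/2) * t ≤ B / s := by
      rw [le_div_iff₀ hs0]
      nlinarith [h6]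
    calc Real.exp (ρ*t/2) * t ≤ B / s := h7
      _ = (1/s) * B := by ring
  -- splitting the integral of g
  have hsplit : (∫ r in (0:ℝ)..B, g r)
      = 2^ρ * (A^(-(ρ/2)) * (∫ r in (0:ℝ)..B, (A-r)^(-(ρ/2)))
        + (Real.exp (ρ*t/2) * A^(-ρ)) * (∫ r in (0:ℝ)..B, (A-r)^(-ρ))) := by
    rw [hg]
    rw [intervalIntegral.integral_const_mul]
    congr 1
    rw [intervalIntegral.integral_add (hint1.const_mul _) (hint2.const_mul _),
      intervalIntegral.integral_const_mul, intervalIntegral.integral_const_mul]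
  -- assemble the key bound
  have hApow : A^(-(ρ/2)) * A^(-(ρ/2)) = A^(-ρ) := by
    rw [← Real.rpow_add hA0]
    congr 1
    ring
  have hAnn : (0:ℝ) ≤ A^(-(ρ/2)) := Real.rpow_nonneg hA0.le _
  have hAρnn : (0:ℝ) ≤ A^(-ρ) := Real.rpow_nonneg hA0.le _
  have key : (∫ r in (0:ℝ)..B, |K0 r t|^ρ) ≤ M * B * A^(-ρ) := by
    have hb1 : A^(-(ρ/2)) * (∫ r in (0:ℝ)..B, (A-r)^(-(ρ/2)))
        ≤ (1/s) * B * A^(-ρ) := by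
      calc A^(-(ρ/2)) * (∫ r in (0:ℝ)..B, (A-r)^(-(ρ/2)))
          ≤ A^(-(ρ/2)) * ((1/s) * B * A^(-(ρ/2))) :=
            mul_le_mul_of_nonneg_left hI1 hAnn
        _ = (1/s) * B * (A^(-(ρ/2)) * A^(-(ρ/2))) := by ring
        _ = (1/s) * B * A^(-ρ) := by rw [hApow]
    have hb2 : (Real.exp (ρ*t/2) * A^(-ρ)) * (∫ r in (0:ℝ)..B, (A-r)^(-ρ))
        ≤ (1/s) * B * A^(-ρ) := by
      have hI2' : (Real.exp (ρ*t/2)) * (∫ r in (0:ℝ)..B, (A-r)^(-ρ))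
          ≤ (1/s) * B := by
        calc (Real.exp (ρ*t/2)) * (∫ r in (0:ℝ)..B, (A-r)^(-ρ))
            ≤ (Real.exp (ρ*t/2)) * t :=
              mul_le_mul_of_nonneg_left hI2 (Real.exp_pos _).le
          _ ≤ (1/s) * B := hexpt
      calc (Real.exp (ρ*t/2) * A^(-ρ)) * (∫ r in (0:ℝ)..B, (A-r)^(-ρ))
          = ((Real.exp (ρ*t/2)) * (∫ r in (0:ℝ)..B, (A-r)^(-ρ))) * A^(-ρ) := by ring
        _ ≤ ((1/s) * B) * A^(-ρ) := mul_le_mul_of_nonneg_right hI2' hAρnn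
        _ = (1/s) * B * A^(-ρ) := by ring
    calc (∫ r in (0:ℝ)..B, |K0 r t|^ρ) ≤ ∫ r in (0:ℝ)..B, g r := hIK
      _ = 2^ρ * (A^(-(ρ/2)) * (∫ r in (0:ℝ)..B, (A-r)^(-(ρ/2)))
          + (Real.exp (ρ*t/2) * A^(-ρ)) * (∫ r in (0:ℝ)..B, (A-r)^(-ρ))) := hsplit
      _ ≤ 2^ρ * ((1/s) * B * A^(-ρ) + (1/s) * B * A^(-ρ)) :=
          mul_le_mul_of_nonneg_left (add_le_add hb1 hb2) h2ρ.le
      _ = M * B * A^(-ρ) := by rw [hM]; ring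
  -- finish: raise to power 1/ρ
  have hnn : 0 ≤ ∫ r in (0:ℝ)..B, |K0 r t|^ρ := by
    apply intervalIntegral.integral_nonneg hB0.le
    intro r hr
    exact Real.rpow_nonneg (abs_nonneg _) ρ
  have hmono := Real.rpow_le_rpow hnn key (le_of_lt (one_div_pos.mpr hρ0))
  refine hmono.trans_eq ?_
  rw [Real.mul_rpow (by positivity) hAρnn, Real.mul_rpow hM0.le hB0.le]
  congr 1
  rw [← Real.rpow_mul hA0.le, show -ρ * (1/ρ) = -1 by field_simp]
  exact Real.rpow_neg_one A
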